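/- Let A = [[-4, -3], [0, 1]] and v = (0, 1) ∈ ℝ². Then the normalized vectors exp(s*A) v / ‖exp(s*A) v‖ converge, as s → +∞, to the unit vector (1/√34) * (-3, 5). -/

import Mathlib

open Matrix Filter

/-- The vector `exp(sA) v` in Euclidean `ℝ²`, for `A = [[-4,-3],[0,1]]` and `v = (0,1)`. -/
noncomputable def expAv (s : ℝ) : EuclideanSpace ℝ (Fin 2) :=
  (EuclideanSpace.equiv (Fin 2) ℝ).symm
    ((NormedSpace.exp (s • (!![-4, -3; 0, 1] : Matrix (Fin 2) (Fin 2) ℝ))).mulVec ![0, 1])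

lemma diag_fin_two (a b : ℝ) : Matrix.diagonal ![a, b] = !![a, 0; 0, b] := by
  ext i j
  fin_cases i <;> fin_cases j <;> simp [Matrix.diagonal]

lemma expA_eq (s : ℝ) :
    NormedSpace.exp (s • (!![-4, -3; 0, 1] : Matrix (Fin 2) (Fin 2) ℝ)) =
      !![Real.exp (-4*s), (-3/5)*(Real.exp s - Real.exp (-4*s)); 0, Real.exp s] := by
  set P : Matrix (Fin 2) (Fin 2) ℝ := !![1, -3; 0, 5] with hP
  set Q : Matrix (Fin 2) (Fin 2) ℝ := !![1, 3/5; 0, 1/5] with hQdef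
  have hPQ : P * Q = 1 := by
    simp [hP, hQdef, Matrix.mul_fin_two]
    norm_num [← Matrix.one_fin_two]
  have hU : IsUnit P := by
    rw [Matrix.isUnit_iff_isUnit_det]
    simp [hP, Matrix.det_fin_two_of]
  have hQ : P⁻¹ = Q := inv_eq_right_inv hPQ
  have hd : NormedSpace.exp (Matrix.diagonal ![-4*s, s]) =
      !![Real.exp (-4*s), 0; 0, Real.exp s] := by
    rw [Matrix.exp_diagonal]
    rw [show NormedSpace.exp ![-4*s, s] = ![Real.exp (-4*s), Real.exp s] by
      rw [Pi.exp_def]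
      funext i
      fin_cases i <;> simp [← Real.exp_eq_exp_ℝ]]
    exact diag_fin_two _ _
  have hconj : s • (!![-4, -3; 0, 1] : Matrix (Fin 2) (Fin 2) ℝ)
      = P * Matrix.diagonal ![-4*s, s] * P⁻¹ := by
    rw [hQ, diag_fin_two]
    ext i j
    fin_cases i <;> fin_cases j <;>
      simp [hP, hQdef, Matrix.mul_fin_two] <;> ring
  rw [hconj, Matrix.exp_conj _ _ hU, hd, hQ]
  ext i j
  fin_cases i <;> fin_cases j <;>
    simp [hP, hQdef, Matrix.mul_fin_two] <;> ring

lemma expAv_eq (s : ℝ) :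
    expAv s = (EuclideanSpace.equiv (Fin 2) ℝ).symm
      ![(-3/5)*(Real.exp s - Real.exp (-4*s)), Real.exp s] := by
  rw [expAv, expA_eq]
  congr 1
  funext i
  fin_cases i <;> simp [Matrix.mulVec, dotProduct, Fin.sum_univ_two]

theorem stmt3 :
    Tendsto (fun s : ℝ => ‖expAv s‖⁻¹ • expAv s) atTop
      (nhds ((Real.sqrt 34)⁻¹ •
        (EuclideanSpace.equiv (Fin 2) ℝ).symm ![(-3 : ℝ), 5])) := by
  set e := (EuclideanSpace.equiv (Fin 2) ℝ).symm with he
  set u : ℝ → EuclideanSpace ℝ (Fin 2) := fun s =>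
    e ![(-3/5)*(1 - Real.exp (-5*s)), 1] with hu
  set w0 : EuclideanSpace ℝ (Fin 2) := e ![(-3/5 : ℝ), 1] with hw0
  have hfac : ∀ s, expAv s = Real.exp s • u s := by
    intro s
    rw [expAv_eq, hu, ← _root_.map_smul]
    congr 1
    funext i
    fin_cases i <;> simp <;>
      rw [show (-(4*s):ℝ) = s + -(5*s) by ring, Real.exp_add] <;> ring
  have hus : ∀ s, u s = w0 + Real.exp (-5*s) • e ![(3/5 : ℝ), 0] := by
    intro s
    rw [hu, hw0, ← _root_.map_smul, ← map_add]
    beta_reduce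
    congr 1
    funext i
    fin_cases i <;> simp <;> ring
  have hexp : Tendsto (fun s : ℝ => Real.exp (-5*s)) atTop (nhds 0) := by
    rw [Real.tendsto_exp_comp_nhds_zero]
    exact (tendsto_const_mul_atBot_of_neg (by norm_num : (-5:ℝ) < 0)).mpr tendsto_id
  have hu_tendsto : Tendsto u atTop (nhds w0) := by
    have h : Tendsto (fun s => w0 + Real.exp (-5*s) • e ![(3/5 : ℝ), 0]) atTop
        (nhds (w0 + (0:ℝ) • e ![(3/5 : ℝ), 0])) :=
      tendsto_const_nhds.add (hexp.smul_const _)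
    simpa [funext hus] using h
  have hw0_norm : ‖w0‖ = Real.sqrt 34 / 5 := by
    rw [hw0, show (e ![(-3/5 : ℝ), 1] : EuclideanSpace ℝ (Fin 2)) = WithLp.toLp 2 ![(-3/5 : ℝ), 1] from rfl,
      EuclideanSpace.norm_eq, Fin.sum_univ_two]
    rw [show ‖(![(-3/5 : ℝ), 1] : Fin 2 → ℝ) 0‖ ^ 2 + ‖(![(-3/5 : ℝ), 1] : Fin 2 → ℝ) 1‖ ^ 2
        = 34 * (1/5)^2 by simp [Real.norm_eq_abs]; norm_num [abs_of_nonpos]]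
    rw [Real.sqrt_mul (by norm_num), Real.sqrt_sq (by norm_num)]
    ring
  have hne : ‖w0‖ ≠ 0 := by rw [hw0_norm]; positivity
  have hg : ContinuousAt (fun w : EuclideanSpace ℝ (Fin 2) => ‖w‖⁻¹ • w) w0 :=
    (continuousAt_id.norm.inv₀ hne).smul continuousAt_id
  have heq : (fun s : ℝ => ‖expAv s‖⁻¹ • expAv s) = fun s => ‖u s‖⁻¹ • u s := by
    funext s
    rw [hfac s, norm_smul, Real.norm_eq_abs, abs_of_pos (Real.exp_pos s), smul_smul,
      mul_inv, mul_comm (Real.exp s)⁻¹, mul_assoc, inv_mul_cancel₀ (Real.exp_pos s).ne',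
      mul_one]
  have h34 : Real.sqrt 34 ≠ 0 := by positivity
  have hfin : ‖w0‖⁻¹ • w0 = (Real.sqrt 34)⁻¹ • e ![(-3 : ℝ), 5] := by
    rw [hw0_norm, hw0, ← _root_.map_smul, ← _root_.map_smul]
    congr 1
    funext i
    fin_cases i <;>
      simp only [Pi.smul_apply, smul_eq_mul, Matrix.cons_val_zero, Matrix.cons_val_one,
        Matrix.head_cons, Fin.zero_eta, Fin.mk_one] <;> field_simp <;> ring
  rw [heq, ← hfin]
  exact hg.tendsto.comp hu_tendsto
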